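/- Let D be a digraph of order n ≥ 3 containing a cycle C of length n−1, with y the vertex not on C. If d(y) ≥ n, then D contains a Hamiltonian bypass. -/

import Mathlib

open Finset

/-- A list of distinct vertices whose consecutive members are joined by arcs. -/
def IsPathList {V : Type*} (A : V → V → Prop) (p : List V) : Prop :=
  p.Nodup ∧ p.Chain' A

/-- A directed cycle: at least two distinct vertices, consecutive arcs, and an arc
from the last vertex back to the first. -/
def IsCycleList {V : Type*} (A : V → V → Prop) (c : List V) : Prop :=
  2 ≤ c.length ∧ c.Nodup ∧ c.Chain' A ∧ ∀ h : c ≠ [], A (c.getLast h) (c.head h)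

/-- A Hamiltonian bypass: a Hamiltonian path `v₁ v₂ … vₙ` together with the arc `v₁ vₙ`. -/
def HasHamBypass {V : Type*} (A : V → V → Prop) : Prop :=
  ∃ l : List V, l.Nodup ∧ (∀ v, v ∈ l) ∧ l.Chain' A ∧
    ∀ h : l ≠ [], A (l.head h) (l.getLast h)

/-- A Hamiltonian cycle. -/
def HasHamCycle {V : Type*} (A : V → V → Prop) : Prop :=
  ∃ c : List V, IsCycleList A c ∧ ∀ v, v ∈ c

/-- out-degree of `x` towards a set `S`. -/
def outDegOn {V : Type*} [DecidableEq V] (A : V → V → Prop) [DecidableRel A]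
    (x : V) (S : Finset V) : ℕ := (S.filter fun y => A x y).card

/-- in-degree of `x` from a set `S`. -/
def inDegOn {V : Type*} [DecidableEq V] (A : V → V → Prop) [DecidableRel A]
    (x : V) (S : Finset V) : ℕ := (S.filter fun y => A y x).card

/-- degree of `x` with respect to a set `S` (arcs in both directions). -/
def degOn {V : Type*} [DecidableEq V] (A : V → V → Prop) [DecidableRel A]
    (x : V) (S : Finset V) : ℕ := outDegOn A x S + inDegOn A x S

/-- out-degree of `x`. -/
def outDeg {V : Type*} [Fintype V] [DecidableEq V] (A : V → V → Prop) [DecidableRel A]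
    (x : V) : ℕ := outDegOn A x Finset.univ

/-- in-degree of `x`. -/
def inDeg {V : Type*} [Fintype V] [DecidableEq V] (A : V → V → Prop) [DecidableRel A]
    (x : V) : ℕ := inDegOn A x Finset.univ

/-- degree of `x`. -/
def deg {V : Type*} [Fintype V] [DecidableEq V] (A : V → V → Prop) [DecidableRel A]
    (x : V) : ℕ := outDeg A x + inDeg A x

/-- The condition `A_k` of Manoussakis: for every triple of distinct vertices `x, y, z`
with `x` and `y` non-adjacent, if `xz` is not an arc then
`d(x)+d(y)+d⁺(x)+d⁻(z) ≥ 3n-2+k`, and if `zx` is not an arc then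
`d(x)+d(y)+d⁻(x)+d⁺(z) ≥ 3n-2+k`. -/
def CondA {V : Type*} [Fintype V] [DecidableEq V] (A : V → V → Prop) [DecidableRel A]
    (k : ℤ) : Prop :=
  ∀ x y z : V, x ≠ y → z ≠ x → z ≠ y → ¬A x y → ¬A y x →
    (¬A x z → (deg A x + deg A y + outDeg A x + inDeg A z : ℤ) ≥
      3 * (Fintype.card V : ℤ) - 2 + k) ∧
    (¬A z x → (deg A x + deg A y + inDeg A x + outDeg A z : ℤ) ≥
      3 * (Fintype.card V : ℤ) - 2 + k)


lemma cycle_rotate_one {V : Type*} {A : V → V → Prop} {c : List V}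
    (hc : IsCycleList A c) : IsCycleList A (c.rotate 1) := by
  obtain ⟨h2, hnd, hch, hla⟩ := hc
  match c, h2 with
  | x :: xs, h2 =>
    have hxs : xs ≠ [] := by
      cases xs with
      | nil => simp at h2
      | cons a t => simp
    have hrot : (x :: xs).rotate 1 = xs ++ [x] := by
      simp [List.rotate_cons_succ]
    rw [hrot]
    have hne : (x :: xs) ≠ [] := List.cons_ne_nil _ _
    have hchx : (∀ z ∈ xs.head?, A x z) ∧ xs.Chain' A := List.isChain_cons.1 hch
    have hlast : A (xs.getLast hxs) x := by
      have := hla hne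
      rwa [List.getLast_cons hxs, List.head_cons] at this
    refine ⟨by simpa using h2, ?_, ?_, ?_⟩
    · simp only [List.nodup_append, List.nodup_cons] at hnd ⊢
      simp_all [List.disjoint_right]
      exact fun a ha hax => hnd.1 (hax ▸ ha)
    · refine List.isChain_append.2 ⟨hchx.2, List.isChain_singleton x, ?_⟩
      intro a ha b hb
      simp only [List.head?_cons, Option.mem_def, Option.some.injEq] at hb
      subst hb
      rw [List.getLast?_eq_getLast_of_ne_nil hxs] at ha
      simp only [Option.mem_def, Option.some.injEq] at ha
      subst ha; exact hlast
    · intro h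
      rw [List.getLast_append_of_right_ne_nil _ _ (List.cons_ne_nil _ _)]
      rw [List.head_append_of_ne_nil hxs]
      simp only [List.getLast_singleton]
      have := hchx.1
      exact this _ (by rw [List.head?_eq_head hxs]; rfl)

lemma cycle_rotate {V : Type*} {A : V → V → Prop} {c : List V}
    (hc : IsCycleList A c) (k : ℕ) : IsCycleList A (c.rotate k) := by
  induction k with
  | zero => simpa using hc
  | succ k ih =>
    have := cycle_rotate_one ih
    rwa [List.rotate_rotate] at this

-- shift counting lemma
lemma shift_count {m : ℕ} [NeZero m] (S : Finset (Fin m))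
    (h : ∀ i ∈ S, i + 1 ∉ S) : 2 * S.card ≤ m := by
  have hinj : Function.Injective (fun i : Fin m => i + 1) := fun a b hab => by
    simpa using congrArg (· + (-1 : Fin m)) hab
  have hdisj : Disjoint S (S.image (fun i => i + 1)) := by
    rw [Finset.disjoint_right]
    intro a ha hb
    obtain ⟨i, hi, rfl⟩ := Finset.mem_image.1 ha
    exact h i hi hb
  have := Finset.card_union_of_disjoint hdisj ▸ Finset.card_le_univ (S ∪ S.image (fun i => i + 1))
  rw [Finset.card_image_of_injective _ hinj] at this
  simpa [two_mul, Fintype.card_fin] using this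


/-- good cycles give Hamiltonian bypasses. -/
theorem stmt17 {V : Type*} [Fintype V] [DecidableEq V] (A : V → V → Prop) [DecidableRel A]
    (hirr : ∀ v, ¬A v v) (hn : 3 ≤ Fintype.card V)
    (c : List V) (hc : IsCycleList A c) (hlen : c.length = Fintype.card V - 1)
    (y : V) (hy : y ∉ c)
    (hd : Fintype.card V ≤ deg A y) :
    HasHamBypass A := by
  unfold HasHamBypass
  have hm2 : 2 ≤ c.length := hc.1
  have hcnd : c.Nodup := hc.2.1
  have hmn : c.length + 1 = Fintype.card V := by omega
  haveI : NeZero c.length := ⟨by omega⟩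
  have hginj : Function.Injective c.get := List.nodup_iff_injective_get.1 hcnd
  have himg : Finset.image c.get Finset.univ = c.toFinset := by
    ext v; simp [List.mem_iff_get]
  have huniv : (Finset.univ : Finset V) = insert y c.toFinset := by
    symm
    apply Finset.eq_univ_of_card
    rw [Finset.card_insert_of_notMem (by simpa using hy),
      List.toFinset_card_of_nodup hcnd]
    omega
  have hout : outDeg A y
      = (Finset.univ.filter fun i : Fin c.length => A y (c.get i)).card := by
    unfold outDeg outDegOn
    rw [huniv, Finset.filter_insert, if_neg (hirr y), ← himg, Finset.filter_image,
      Finset.card_image_of_injective _ hginj]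
  have hin : inDeg A y
      = (Finset.univ.filter fun i : Fin c.length => A (c.get i) y).card := by
    unfold inDeg inDegOn
    rw [huniv, Finset.filter_insert, if_neg (hirr y), ← himg, Finset.filter_image,
      Finset.card_image_of_injective _ hginj]
  have key : ∃ i : Fin c.length,
      (A (c.get i) y ∧ A (c.get (i+1)) y) ∨ (A y (c.get i) ∧ A y (c.get (i+1))) := by
    by_contra hK
    push_neg at hK
    have h1 := shift_count (Finset.univ.filter fun i : Fin c.length => A (c.get i) y)
      (by intro i hi hi1
          simp only [Finset.mem_filter, Finset.mem_univ, true_and] at hi hi1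
          exact (hK i).1 hi hi1)
    have h2 := shift_count (Finset.univ.filter fun i : Fin c.length => A y (c.get i))
      (by intro i hi hi1
          simp only [Finset.mem_filter, Finset.mem_univ, true_and] at hi hi1
          exact (hK i).2 hi hi1)
    have : deg A y = _ + _ := congrArg₂ (· + ·) hout hin
    unfold deg at hd
    rw [hout, hin] at hd
    omega
  obtain ⟨i, hi⟩ := key
  have hk : (i + 1 : Fin c.length).val = (i.val + 1) % c.length := by
    have h1 : (1 : ℕ) % c.length = 1 := Nat.mod_eq_of_lt (by omega)
    rw [Fin.add_def]
    simp [Fin.val_one', h1]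
  set k : ℕ := (i + 1 : Fin c.length).val with hkdef
  have hlen' : (c.rotate k).length = c.length := List.length_rotate c k
  have hne' : (c.rotate k) ≠ [] := by
    intro h; rw [h] at hlen'; simp at hlen'; omega
  have hcyc' := cycle_rotate hc k
  have hnd' : (c.rotate k).Nodup := hcyc'.2.1
  have hch' : (c.rotate k).Chain' A := hcyc'.2.2.1
  have hymem : y ∉ (c.rotate k) := fun h => hy (List.mem_rotate.1 h)
  have hmemc' : ∀ v : V, v ≠ y → v ∈ (c.rotate k) := by
    intro v hv
    have hv2 : v ∈ insert y c.toFinset := huniv ▸ Finset.mem_univ v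
    rcases Finset.mem_insert.1 hv2 with h | h
    · exact absurd h hv
    · exact List.mem_rotate.2 (List.mem_toFinset.1 h)
  have hhead : (c.rotate k).head hne' = c.get (i + 1) := by
    have h0 : (0 : ℕ) < (c.rotate k).length := by omega
    have : (c.rotate k).head hne' = (c.rotate k).get ⟨0, h0⟩ := by
      simp [List.get_eq_getElem, List.head_eq_getElem_zero hne']
    rw [this, List.get_rotate]
    congr 1
    apply Fin.ext
    simp only []
    show (0 + k) % c.length = (i + 1 : Fin c.length).val
    rw [Nat.zero_add, hkdef]
    exact Nat.mod_eq_of_lt (i + 1 : Fin c.length).isLt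
  have hlast : (c.rotate k).getLast hne' = c.get i := by
    have h0 : (c.rotate k).length - 1 < (c.rotate k).length := by omega
    have : (c.rotate k).getLast hne' = (c.rotate k).get ⟨(c.rotate k).length - 1, h0⟩ := by
      simp [List.get_eq_getElem, List.getLast_eq_getElem]
    rw [this, List.get_rotate]
    congr 1
    apply Fin.ext
    show ((c.rotate k).length - 1 + k) % c.length = i.val
    rw [List.length_rotate]
    rcases Nat.lt_or_ge (i.val + 1) c.length with h | h
    · have hk1 : k = i.val + 1 := by rw [hk]; exact Nat.mod_eq_of_lt h
      have he : c.length - 1 + k = c.length + i.val := by omega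
      rw [he, Nat.add_mod_left]
      exact Nat.mod_eq_of_lt i.isLt
    · have him : i.val + 1 = c.length := by have := i.isLt; omega
      have hk1 : k = 0 := by rw [hk, him, Nat.mod_self]
      rw [hk1, Nat.add_zero]
      rw [Nat.mod_eq_of_lt (by omega)]
      omega
  rcases hi with ⟨ha1, ha2⟩ | ⟨hb1, hb2⟩
  · -- arcs c.get i → y and c.get (i+1) → y : list c' ++ [y]
    refine ⟨(c.rotate k) ++ [y], ?_, ?_, ?_, ?_⟩
    · rw [List.nodup_append]
      exact ⟨hnd', List.nodup_singleton y, by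
        intro a haa b hb hab
        simp only [List.mem_singleton] at hb
        rw [hb] at hab; rw [hab] at haa; exact hymem haa⟩
    · intro v
      by_cases hv : v = y
      · subst hv; simp
      · exact List.mem_append.2 (Or.inl (hmemc' v hv))
    · refine List.isChain_append.2 ⟨hch', List.isChain_singleton y, ?_⟩
      intro a haa b hab
      simp only [List.head?_cons, Option.mem_def, Option.some.injEq] at hab
      subst hab
      rw [List.getLast?_eq_getLast_of_ne_nil hne'] at haa
      simp only [Option.mem_def, Option.some.injEq] at haa
      subst haa
      rw [hlast]; exact ha1
    · intro h
      rw [List.head_append_of_ne_nil hne', List.getLast_append_of_right_ne_nil _ _ (List.cons_ne_nil _ _)]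
      simp only [List.getLast_singleton]
      rw [hhead]; exact ha2
  · -- arcs y → c.get i and y → c.get (i+1) : list y :: c'
    refine ⟨y :: (c.rotate k), ?_, ?_, ?_, ?_⟩
    · exact List.nodup_cons.2 ⟨hymem, hnd'⟩
    · intro v
      by_cases hv : v = y
      · subst hv; simp
      · exact List.mem_cons.2 (Or.inr (hmemc' v hv))
    · refine List.isChain_cons.2 ⟨?_, hch'⟩
      intro z hz
      rw [List.head?_eq_head hne'] at hz
      simp only [Option.mem_def, Option.some.injEq] at hz
      subst hz
      rw [hhead]; exact hb2
    · intro h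
      rw [List.head_cons, List.getLast_cons hne']
      rw [hlast]; exact hb1
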